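/- Let X be an infinite-dimensional real Banach space and let ψ : [0,∞) → [0,∞) be an increasing function with ψ(s) → 0 as s → 0⁺. Then there exists a continuous function f : [0,1] → X such that ‖f(s) − f(t)‖_X ≥ ψ(|s − t|) for all s, t ∈ [0,1]. -/

import Mathlib

open MeasureTheory Filter Set
open scoped Topology

section helpers
open Metric



noncomputable def tentf (δ : ℝ) (m : ℕ) (t : ℝ) : ℝ := max 0 (1 - |t / δ - m|)

lemma tentf_nonneg (δ : ℝ) (m : ℕ) (t : ℝ) : 0 ≤ tentf δ m t := le_max_left _ _

lemma tentf_le_one (δ : ℝ) (m : ℕ) (t : ℝ) : tentf δ m t ≤ 1 :=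
  max_le zero_le_one (by have := abs_nonneg (t / δ - m); linarith)

lemma tentf_continuous (δ : ℝ) (m : ℕ) : Continuous (tentf δ m) := by
  apply Continuous.max continuous_const
  apply Continuous.sub continuous_const
  apply Continuous.abs
  exact (continuous_id.div_const δ).sub continuous_const

lemma tentf_eq_zero {δ : ℝ} {m : ℕ} {t : ℝ} (h : 1 ≤ |t / δ - m|) : tentf δ m t = 0 :=
  max_eq_left (by linarith)

lemma tentf_floor {δ : ℝ} (hδ : 0 < δ) {t : ℝ} (ht : 0 ≤ t) :
    tentf δ ⌊t / δ⌋₊ t = 1 - (t / δ - ⌊t / δ⌋₊) ∧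
    tentf δ (⌊t / δ⌋₊ + 1) t = t / δ - ⌊t / δ⌋₊ := by
  have hu : 0 ≤ t / δ := div_nonneg ht hδ.le
  have h1 : (⌊t / δ⌋₊ : ℝ) ≤ t / δ := Nat.floor_le hu
  have h2 : t / δ < ⌊t / δ⌋₊ + 1 := Nat.lt_floor_add_one _
  constructor
  · rw [tentf, abs_of_nonneg (by linarith)]
    exact max_eq_right (by linarith)
  · have habs : |t / δ - ((⌊t / δ⌋₊ : ℝ) + 1)| = 1 - (t / δ - ⌊t / δ⌋₊) := by
      rw [abs_of_nonpos (by linarith)]; ring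
    rw [tentf]
    push_cast
    rw [habs, show (1 : ℝ) - (1 - (t / δ - ⌊t / δ⌋₊)) = t / δ - ⌊t / δ⌋₊ by ring]
    exact max_eq_right (by linarith)

lemma tentf_sum_le {δ : ℝ} (hδ : 0 < δ) (F : Finset ℕ) (t : ℝ) :
    ∑ m ∈ F, tentf δ m t ≤ 1 := by
  set n0 := ⌊t / δ⌋₊ with hn0
  have hvanish : ∀ m : ℕ, m ∉ ({n0, n0 + 1} : Finset ℕ) → tentf δ m t = 0 := by
    intro m hm
    simp only [Finset.mem_insert, Finset.mem_singleton] at hm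
    push_neg at hm
    apply tentf_eq_zero
    rcases le_or_gt 0 (t / δ) with hu | hu
    · have h1 : (n0 : ℝ) ≤ t / δ := Nat.floor_le hu
      have h2 : t / δ < n0 + 1 := Nat.lt_floor_add_one _
      rcases lt_or_gt_of_ne hm.1 with h | h
      · have : m + 1 ≤ n0 := h
        have : (m : ℝ) + 1 ≤ n0 := by exact_mod_cast this
        rw [abs_of_nonneg (by linarith)]; linarith
      · have : n0 + 2 ≤ m := by omega
        have : (n0 : ℝ) + 2 ≤ m := by exact_mod_cast this
        rw [abs_of_nonpos (by linarith)]; linarith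
    · have hn00 : n0 = 0 := Nat.floor_eq_zero.mpr (by linarith [ (by norm_num : (0:ℝ) < 1)] )
      have : 1 ≤ m := by omega
      have : (1 : ℝ) ≤ m := by exact_mod_cast this
      rw [abs_of_nonpos (by linarith)]; linarith
  have hsub : ∑ m ∈ F, tentf δ m t = ∑ m ∈ F ∩ {n0, n0 + 1}, tentf δ m t := by
    apply (Finset.sum_subset (Finset.inter_subset_left) ?_).symm
    intro m hmF hmn
    apply hvanish
    intro hc
    exact hmn (Finset.mem_inter.mpr ⟨hmF, hc⟩)
  rw [hsub]
  calc ∑ m ∈ F ∩ {n0, n0 + 1}, tentf δ m t ≤ ∑ m ∈ ({n0, n0+1} : Finset ℕ), tentf δ m t := by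
        apply Finset.sum_le_sum_of_subset_of_nonneg (Finset.inter_subset_right)
        intro m _ _
        exact tentf_nonneg δ m t
  _ ≤ 1 := by
      rw [Finset.sum_pair (by omega : n0 ≠ n0 + 1)]
      rcases le_or_gt 0 t with ht | ht
      · obtain ⟨e1, e2⟩ := tentf_floor hδ ht
        rw [← hn0] at e1 e2
        rw [e1, e2]; ring_nf; exact le_refl 1
      · have hu : t / δ < 0 := div_neg_of_neg_of_pos ht hδ
        have hn00 : n0 = 0 := Nat.floor_eq_zero.mpr (by linarith [(by norm_num : (0:ℝ) < 1)])
        have hz : tentf δ (n0 + 1) t = 0 := by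
          apply tentf_eq_zero
          rw [hn00]
          push_cast
          rw [abs_of_nonpos (by linarith)]
          linarith
        rw [hz]
        have := tentf_le_one δ n0 t
        linarith




variable {X : Type*} [NormedAddCommGroup X] [NormedSpace ℝ X]

set_option synthInstance.maxHeartbeats 800000 in
set_option maxHeartbeats 1600000 in
lemma step_lemma (hX : ¬ FiniteDimensional ℝ X) (V : Submodule ℝ X)
    (hV : FiniteDimensional ℝ V) :
    ∃ (u : X) (φ : X →L[ℝ] ℝ), ‖u‖ = 1 ∧ ‖φ‖ ≤ 2 ∧ φ u = 1 ∧ ∀ y ∈ V, φ y = 0 := by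
  have hVc : IsClosed (V : Set X) := V.closed_of_finiteDimensional
  have hVne : ∃ x : X, x ∉ V := by
    by_contra h
    push_neg at h
    have htop : V = ⊤ := by
      ext z; simp [h z]
    apply hX
    have : FiniteDimensional ℝ (⊤ : Submodule ℝ X) := htop ▸ hV
    exact (Submodule.topEquiv : (⊤ : Submodule ℝ X) ≃ₗ[ℝ] X).finiteDimensional
  obtain ⟨x₀, hx₀, hsep⟩ := riesz_lemma (𝕜 := ℝ) hVc hVne (r := 2⁻¹) (by norm_num)
  have hx₀0 : x₀ ≠ 0 := fun h => hx₀ (h ▸ V.zero_mem)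
  have hnx₀ : 0 < ‖x₀‖ := norm_pos_iff.mpr hx₀0
  set u : X := ‖x₀‖⁻¹ • x₀ with hu
  have hun : ‖u‖ = 1 := by
    rw [hu, norm_smul, norm_inv, norm_norm, inv_mul_cancel₀ hnx₀.ne']
  have husep : ∀ y ∈ V, (2:ℝ)⁻¹ ≤ ‖u - y‖ := by
    intro y hy
    have h2 := hsep (‖x₀‖ • y) (V.smul_mem _ hy)
    have heq : u - y = ‖x₀‖⁻¹ • (x₀ - ‖x₀‖ • y) := by
      rw [smul_sub, smul_smul, inv_mul_cancel₀ hnx₀.ne', one_smul, hu]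
    have hnr : ‖u - y‖ = ‖x₀‖⁻¹ * ‖x₀ - ‖x₀‖ • y‖ := by
      rw [heq, norm_smul, Real.norm_eq_abs, abs_of_nonneg (by positivity)]
    rw [hnr]
    calc (2:ℝ)⁻¹ = ‖x₀‖⁻¹ * (2⁻¹ * ‖x₀‖) := by field_simp
    _ ≤ ‖x₀‖⁻¹ * ‖x₀ - ‖x₀‖ • y‖ := mul_le_mul_of_nonneg_left h2 (by positivity)
  haveI : IsClosed (V : Set X) := hVc
  have hmku : (2:ℝ)⁻¹ ≤ ‖(Submodule.Quotient.mk u : X ⧸ V)‖ := by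
    by_contra h
    push_neg at h
    obtain ⟨m, hm, hmlt⟩ := Submodule.Quotient.norm_mk_lt
      (Submodule.Quotient.mk u : X ⧸ V) (ε := 2⁻¹ - ‖(Submodule.Quotient.mk u : X ⧸ V)‖)
      (by linarith)
    have hmem : m - u ∈ V := (Submodule.Quotient.eq V).mp hm
    have := husep (u - m) (by simpa using V.neg_mem hmem)
    have : (2:ℝ)⁻¹ ≤ ‖m‖ := by simpa using this
    linarith
  have hmkne : (Submodule.Quotient.mk u : X ⧸ V) ≠ 0 := by
    intro h
    rw [h, norm_zero] at hmku
    norm_num at hmku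
  obtain ⟨g, hg1, hgu⟩ := exists_dual_vector ℝ (Submodule.Quotient.mk u : X ⧸ V) (lt_of_lt_of_le (by norm_num) hmku).ne'
  let π : X →L[ℝ] X ⧸ V :=
    LinearMap.mkContinuous (V.mkQ) 1 (fun z => by
      simpa using Submodule.Quotient.norm_mk_le V z)
  have hπ : ∀ z : X, π z = Submodule.Quotient.mk z := fun z => rfl
  set d : ℝ := ‖(Submodule.Quotient.mk u : X ⧸ V)‖ with hd
  have hdpos : 0 < d := lt_of_lt_of_le (by norm_num) hmku
  have hdle : d ≤ 1 := by
    have := Submodule.Quotient.norm_mk_le V u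
    rw [hun] at this
    exact this
  refine ⟨u, d⁻¹ • (g.comp π), hun, ?_, ?_, ?_⟩
  · have hπn : ‖π‖ ≤ 1 := LinearMap.mkContinuous_norm_le _ (by norm_num) _
    have hcomp : ‖g.comp π‖ ≤ 1 := by
      calc ‖g.comp π‖ ≤ ‖g‖ * ‖π‖ := g.opNorm_comp_le π
      _ ≤ 1 := by rw [hg1]; simpa using hπn
    calc ‖d⁻¹ • (g.comp π)‖ = d⁻¹ * ‖g.comp π‖ := by
          rw [norm_smul d⁻¹ (g.comp π), Real.norm_eq_abs, abs_of_nonneg (by positivity)]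
    _ ≤ d⁻¹ * 1 := by apply mul_le_mul_of_nonneg_left hcomp (by positivity)
    _ ≤ 2 := by
        rw [mul_one]
        rw [show (2:ℝ) = (2⁻¹)⁻¹ by norm_num]
        exact inv_anti₀ (by norm_num) hmku
  · simp only [ContinuousLinearMap.smul_apply, ContinuousLinearMap.comp_apply, hπ]
    rw [hgu]
    simp [smul_eq_mul, inv_mul_cancel₀ hdpos.ne']
  · intro y hy
    simp only [ContinuousLinearMap.smul_apply, ContinuousLinearMap.comp_apply, hπ]
    have : (Submodule.Quotient.mk y : X ⧸ V) = 0 := (Submodule.Quotient.mk_eq_zero V).mpr hy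
    rw [this]
    simp

set_option synthInstance.maxHeartbeats 800000 in
set_option maxHeartbeats 1600000 in
lemma exists_triangular (hX : ¬ FiniteDimensional ℝ X) :
    ∃ (x : ℕ → X) (φ : ℕ → X →L[ℝ] ℝ),
      (∀ n, ‖x n‖ = 1) ∧ (∀ n, ‖φ n‖ ≤ 2) ∧ (∀ n, φ n (x n) = 1) ∧
      ∀ m n : ℕ, m < n → φ n (x m) = 0 := by
  classical
  have hstep : ∀ V : Submodule ℝ X, FiniteDimensional ℝ V →
      ∃ p : X × (X →L[ℝ] ℝ), ‖p.1‖ = 1 ∧ ‖p.2‖ ≤ 2 ∧ p.2 p.1 = 1 ∧ ∀ y ∈ V, p.2 y = 0 := by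
    intro V hV
    obtain ⟨u, φ, h1, h2, h3, h4⟩ := step_lemma hX V hV
    exact ⟨(u, φ), h1, h2, h3, h4⟩
  let next : Submodule ℝ X → X × (X →L[ℝ] ℝ) := fun V =>
    if h : FiniteDimensional ℝ V then (hstep V h).choose else 0
  have hnext : ∀ V : Submodule ℝ X, FiniteDimensional ℝ V → ‖(next V).1‖ = 1 ∧ ‖(next V).2‖ ≤ 2 ∧
      (next V).2 (next V).1 = 1 ∧ ∀ y ∈ V, (next V).2 y = 0 := by
    intro V h
    simp only [next, dif_pos h]
    exact (hstep V h).choose_spec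
  let S : ℕ → Submodule ℝ X := fun n =>
    Nat.rec (motive := fun _ => Submodule ℝ X) ⊥ (fun _ W => W ⊔ Submodule.span ℝ {(next W).1}) n
  have hSsucc : ∀ n, S (n+1) = S n ⊔ Submodule.span ℝ {(next (S n)).1} := fun _ => rfl
  have hfd : ∀ n, FiniteDimensional ℝ (S n) := by
    intro n
    induction n with
    | zero =>
      rw [show S 0 = ⊥ from rfl]
      infer_instance
    | succ n ih =>
      rw [hSsucc]
      haveI := ih
      infer_instance
  have hmono : ∀ m n : ℕ, m ≤ n → S m ≤ S n := by
    intro m n h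
    induction h with
    | refl => exact le_rfl
    | step _ ih => exact le_trans ih (by rw [hSsucc]; exact le_sup_left)
  refine ⟨fun n => (next (S n)).1, fun n => (next (S n)).2, ?_, ?_, ?_, ?_⟩
  · exact fun n => (hnext (S n) (hfd n)).1
  · exact fun n => (hnext (S n) (hfd n)).2.1
  · exact fun n => (hnext (S n) (hfd n)).2.2.1
  · intro m n hmn
    apply (hnext (S n) (hfd n)).2.2.2
    have h1 : (next (S m)).1 ∈ S (m+1) := by
      rw [hSsucc]
      exact Submodule.mem_sup_right (Submodule.mem_span_singleton_self _)
    exact hmono (m+1) n hmn h1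

end helpers

section curve
variable {X : Type*} [NormedAddCommGroup X] [NormedSpace ℝ X]

noncomputable def Mfun (δ : ℕ → ℝ) (n : ℕ) : ℕ := ⌊(δ n)⁻¹⌋₊ + 2

noncomputable def offfun (δ : ℕ → ℝ) : ℕ → ℕ
  | 0 => 0
  | n + 1 => offfun δ n + Mfun δ n + 1

lemma offfun_mono (δ : ℕ → ℝ) : Monotone (offfun δ) := by
  apply monotone_nat_of_le_succ
  intro n
  rw [offfun]
  omega

lemma offfun_lt (δ : ℕ → ℝ) {j n m : ℕ} (hjn : j < n) (hm : m ≤ Mfun δ j) :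
    offfun δ j + m < offfun δ n := by
  have h1 : offfun δ j + m < offfun δ (j + 1) := by rw [offfun]; omega
  exact lt_of_lt_of_le h1 (offfun_mono δ hjn)

noncomputable def curveF (x : ℕ → X) (A : ℝ) (δ : ℕ → ℝ) (n : ℕ) (t : ℝ) : X :=
  ∑ m ∈ Finset.range (Mfun δ n + 1),
    ((A * (8192:ℝ)⁻¹ ^ n) * tentf (δ n) m t) • x (offfun δ n + m)

lemma curveF_norm_le (x : ℕ → X) {A : ℝ} (δ : ℕ → ℝ) (hx : ∀ k, ‖x k‖ = 1) (hA : 0 ≤ A)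
    (hδ : ∀ n, 0 < δ n) (n : ℕ) (t : ℝ) : ‖curveF x A δ n t‖ ≤ A * (8192:ℝ)⁻¹ ^ n := by
  have hAn : 0 ≤ A * (8192:ℝ)⁻¹ ^ n := by positivity
  calc ‖curveF x A δ n t‖ ≤ ∑ m ∈ Finset.range (Mfun δ n + 1),
        ‖((A * (8192:ℝ)⁻¹ ^ n) * tentf (δ n) m t) • x (offfun δ n + m)‖ :=
        norm_sum_le _ _
  _ = ∑ m ∈ Finset.range (Mfun δ n + 1), (A * (8192:ℝ)⁻¹ ^ n) * tentf (δ n) m t := by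
      apply Finset.sum_congr rfl
      intro m _
      rw [norm_smul, hx, mul_one, Real.norm_eq_abs,
        abs_of_nonneg (mul_nonneg hAn (tentf_nonneg _ _ _))]
  _ = (A * (8192:ℝ)⁻¹ ^ n) * ∑ m ∈ Finset.range (Mfun δ n + 1), tentf (δ n) m t := by
      rw [Finset.mul_sum]
  _ ≤ (A * (8192:ℝ)⁻¹ ^ n) * 1 := by
      apply mul_le_mul_of_nonneg_left (tentf_sum_le (hδ n) _ t) hAn
  _ = A * (8192:ℝ)⁻¹ ^ n := mul_one _

lemma summable_bound {A : ℝ} : Summable (fun n => A * (8192:ℝ)⁻¹ ^ n) :=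
  (summable_geometric_of_lt_one (by norm_num) (by norm_num)).mul_left A

lemma curveF_summable (x : ℕ → X) {A : ℝ} (δ : ℕ → ℝ) (hx : ∀ k, ‖x k‖ = 1) (hA : 0 ≤ A)
    (hδ : ∀ n, 0 < δ n) [CompleteSpace X] (t : ℝ) : Summable (fun n => curveF x A δ n t) :=
  Summable.of_norm_bounded summable_bound (fun n => curveF_norm_le x δ hx hA hδ n t)

noncomputable def curve (x : ℕ → X) (A : ℝ) (δ : ℕ → ℝ) (t : ℝ) : X := ∑' n, curveF x A δ n t

lemma curve_continuous (x : ℕ → X) {A : ℝ} (δ : ℕ → ℝ) (hx : ∀ k, ‖x k‖ = 1) (hA : 0 ≤ A)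
    (hδ : ∀ n, 0 < δ n) [CompleteSpace X] : Continuous (curve x A δ) := by
  apply continuous_tsum ?_ summable_bound (fun n t => curveF_norm_le x δ hx hA hδ n t)
  intro n
  apply continuous_finset_sum
  intro m _
  exact (continuous_const.mul (tentf_continuous (δ n) m)).smul continuous_const



set_option maxHeartbeats 1600000 in
lemma curve_lower [CompleteSpace X] (x : ℕ → X) (φ : ℕ → X →L[ℝ] ℝ)
    (hx : ∀ k, ‖x k‖ = 1) (hφ2 : ∀ k, ‖φ k‖ ≤ 2) (hφ1 : ∀ k, φ k (x k) = 1)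
    (hφ0 : ∀ i k, i < k → φ k (x i) = 0)
    {A : ℝ} (hA : 0 < A) {δ : ℕ → ℝ} (hδ : ∀ n, 0 < δ n)
    (n : ℕ) {s t : ℝ} (hs : 0 ≤ s) (ht1 : t ≤ 1) (hst : s + 2 * δ n ≤ t) :
    A * (8192:ℝ)⁻¹ ^ n / 1024 ≤ ‖curve x A δ s - curve x A δ t‖ := by
  have habs_lower : ∀ u v : ℝ, |u| - |v| ≤ |u + v| := by
    intro u v
    have h := abs_add_le (u + v) (-v)
    rw [abs_neg] at h
    have h2 : u + v + -v = u := by ring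
    rw [h2] at h
    linarith
  set a : ℕ → ℝ := fun j => A * (8192:ℝ)⁻¹ ^ j with ha
  have haj : ∀ j, a j = A * (8192:ℝ)⁻¹ ^ j := fun j => rfl
  have hapos : ∀ j, 0 < a j := fun j => by rw [haj]; positivity
  have hDpos : 0 < δ n := hδ n
  have ht0 : 0 ≤ t := le_trans (by positivity) hst
  have hu0 : 0 ≤ t / δ n := div_nonneg ht0 hDpos.le
  set mt : ℕ := ⌊t / δ n⌋₊ with hmt
  set β : ℝ := t / δ n - mt with hβ
  have hβ0 : 0 ≤ β := by
    have h := Nat.floor_le hu0; rw [← hmt] at h; rw [hβ]; linarith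
  have hβ1 : β < 1 := by
    have h := Nat.lt_floor_add_one (t / δ n); rw [← hmt] at h; rw [hβ]; linarith
  have hmtlt : (t / δ n) < mt + 1 := by rw [hmt]; exact Nat.lt_floor_add_one _
  have hmtM : mt + 1 ≤ Mfun δ n := by
    have h1 : t / δ n ≤ (δ n)⁻¹ := by
      rw [div_eq_mul_inv]
      nlinarith [inv_pos.mpr hDpos]
    have h2 : mt ≤ ⌊(δ n)⁻¹⌋₊ := Nat.floor_mono h1
    rw [Mfun]; omega
  have hsdiv : s / δ n + 2 ≤ t / δ n := by
    have h : (s + 2 * δ n) / δ n ≤ t / δ n := by gcongr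
    have h2 : (s + 2 * δ n) / δ n = s / δ n + 2 := by field_simp
    linarith
  have hmtle : (mt : ℝ) ≤ t / δ n := by rw [hmt]; exact Nat.floor_le hu0
  have hts0 : ∀ m : ℕ, mt ≤ m → tentf (δ n) m s = 0 := by
    intro m hm
    apply tentf_eq_zero
    have hcast : (mt : ℝ) ≤ m := by exact_mod_cast hm
    have : s / δ n + 1 ≤ m := by linarith
    rw [abs_of_nonpos (by linarith)]
    linarith
  have htt0 : ∀ m : ℕ, mt + 2 ≤ m → tentf (δ n) m t = 0 := by
    intro m hm
    apply tentf_eq_zero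
    have hcast : (mt : ℝ) + 2 ≤ m := by exact_mod_cast hm
    rw [abs_of_nonpos (by linarith)]
    linarith
  obtain ⟨htent0, htent1⟩ := tentf_floor hDpos ht0
  rw [← hmt] at htent0 htent1
  set g : ℕ → X := fun j => curveF x A δ j s - curveF x A δ j t with hg
  have hgs : Summable g := (curveF_summable x δ hx hA.le hδ s).sub (curveF_summable x δ hx hA.le hδ t)
  have hgnorm : ∀ j, ‖g j‖ ≤ 2 * a j := by
    intro j
    calc ‖g j‖ ≤ ‖curveF x A δ j s‖ + ‖curveF x A δ j t‖ := norm_sub_le _ _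
    _ ≤ a j + a j := add_le_add (curveF_norm_le x δ hx hA.le hδ j s) (curveF_norm_le x δ hx hA.le hδ j t)
    _ = 2 * a j := by ring
  set R : X := ∑' j, g (j + (n + 1)) with hR
  have hbd : ∀ j : ℕ, 2 * a (j + (n + 1)) = 2 * A * (8192:ℝ)⁻¹ ^ (n + 1) * (8192:ℝ)⁻¹ ^ j := by
    intro j
    rw [haj, pow_add]
    ring
  have hb : Summable (fun j => 2 * A * (8192:ℝ)⁻¹ ^ (n + 1) * (8192:ℝ)⁻¹ ^ j) :=
    (summable_geometric_of_lt_one (by norm_num) (by norm_num)).mul_left _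
  have hgn : Summable (fun j => ‖g (j + (n + 1))‖) := by
    apply Summable.of_nonneg_of_le (fun j => norm_nonneg _) ?_ hb
    intro j
    rw [← hbd j]
    exact hgnorm _
  have hRnorm : ‖R‖ ≤ 4 * A * (8192:ℝ)⁻¹ ^ (n + 1) := by
    calc ‖R‖ ≤ ∑' j, ‖g (j + (n + 1))‖ := norm_tsum_le_tsum_norm hgn
    _ ≤ ∑' j : ℕ, 2 * A * (8192:ℝ)⁻¹ ^ (n + 1) * (8192:ℝ)⁻¹ ^ j :=
        Summable.tsum_le_tsum (fun j => by rw [← hbd j]; exact hgnorm _) hgn hb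
    _ = 2 * A * (8192:ℝ)⁻¹ ^ (n + 1) * (1 - (8192:ℝ)⁻¹)⁻¹ := by
        rw [tsum_mul_left, tsum_geometric_of_lt_one (by norm_num) (by norm_num)]
    _ ≤ 2 * A * (8192:ℝ)⁻¹ ^ (n + 1) * 2 := by
        apply mul_le_mul_of_nonneg_left (by norm_num) (by positivity)
    _ = 4 * A * (8192:ℝ)⁻¹ ^ (n + 1) := by ring
  have hsplit : curve x A δ s - curve x A δ t = (∑ j ∈ Finset.range (n + 1), g j) + R := by
    rw [curve, curve, ← Summable.tsum_sub (curveF_summable x δ hx hA.le hδ s) (curveF_summable x δ hx hA.le hδ t)]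
    exact (hgs.sum_add_tsum_nat_add (n + 1)).symm
  set c : ℕ → ℝ := fun m => a n * (tentf (δ n) m s - tentf (δ n) m t) with hc
  have hcm : ∀ m, c m = a n * (tentf (δ n) m s - tentf (δ n) m t) := fun m => rfl
  have hgn_eq : g n = ∑ m ∈ Finset.range (Mfun δ n + 1), c m • x (offfun δ n + m) := by
    rw [hg]
    simp only [curveF, ← Finset.sum_sub_distrib]
    apply Finset.sum_congr rfl
    intro m _
    rw [← sub_smul]
    congr 1
    rw [hcm, haj]
    ring
  have hφgj : ∀ k, offfun δ n ≤ k → ∀ j < n, φ k (g j) = 0 := by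
    intro k hk j hj
    rw [hg]
    simp only [curveF, ← Finset.sum_sub_distrib]
    rw [map_sum]
    apply Finset.sum_eq_zero
    intro m hm
    rw [← sub_smul, _root_.map_smul]
    have hlt : offfun δ j + m < k := by
      apply lt_of_lt_of_le ?_ hk
      apply offfun_lt δ hj
      simp only [Finset.mem_range] at hm
      omega
    rw [hφ0 _ _ hlt]
    simp
  have hφsum : ∀ k, offfun δ n ≤ k →
      φ k (curve x A δ s - curve x A δ t) = φ k (g n) + φ k R := by
    intro k hk
    rw [hsplit, map_add, map_sum]
    congr 1
    rw [Finset.sum_eq_single_of_mem n (Finset.self_mem_range_succ n)]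
    intro j hj hjn
    exact hφgj k hk j (by simp only [Finset.mem_range] at hj; omega)
  have hφR : ∀ k, |φ k R| ≤ a n / 1024 := by
    intro k
    have h1 : |φ k R| ≤ ‖φ k‖ * ‖R‖ := (φ k).le_opNorm R
    have h2 : ‖φ k‖ * ‖R‖ ≤ 2 * (4 * A * (8192:ℝ)⁻¹ ^ (n + 1)) :=
      mul_le_mul (hφ2 k) hRnorm (norm_nonneg _) (by norm_num)
    have h3 : 2 * (4 * A * (8192:ℝ)⁻¹ ^ (n + 1)) = a n / 1024 := by
      rw [haj, pow_succ]
      ring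
    linarith
  have hφk1gn : φ (offfun δ n + (mt + 1)) (g n) = -(a n * β) := by
    rw [hgn_eq, map_sum]
    rw [Finset.sum_eq_single_of_mem (mt + 1) (by simp only [Finset.mem_range]; omega)]
    · rw [_root_.map_smul, hφ1 (offfun δ n + (mt + 1))]
      have : c (mt + 1) = -(a n * β) := by
        rw [hcm, hts0 (mt + 1) (by omega), htent1, hβ]
        ring
      rw [this]
      simp
    · intro m hm hne
      rcases lt_or_gt_of_ne hne with h | h
      · rw [_root_.map_smul, hφ0 (offfun δ n + m) (offfun δ n + (mt + 1)) (by omega)]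
        simp
      · have h0 : c m = 0 := by
          rw [hcm, hts0 m (by omega), htt0 m (by omega)]
          ring
        rw [h0, zero_smul, map_zero]
  have hφk0gn : ∃ q : ℝ, |q| ≤ 2 ∧
      φ (offfun δ n + mt) (g n) = -(a n * (1 - β)) + (-(a n * β)) * q := by
    refine ⟨φ (offfun δ n + mt) (x (offfun δ n + (mt + 1))), ?_, ?_⟩
    · have h := (φ (offfun δ n + mt)).le_opNorm (x (offfun δ n + (mt + 1)))
      rw [Real.norm_eq_abs, hx] at h
      have h2 := hφ2 (offfun δ n + mt)
      linarith
    · rw [hgn_eq, map_sum]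
      have hsub : ({mt, mt + 1} : Finset ℕ) ⊆ Finset.range (Mfun δ n + 1) := by
        intro m hm
        simp only [Finset.mem_insert, Finset.mem_singleton] at hm
        simp only [Finset.mem_range]
        omega
      rw [← Finset.sum_subset hsub ?_]
      · rw [Finset.sum_pair (by omega : mt ≠ mt + 1)]
        rw [_root_.map_smul, _root_.map_smul, hφ1 (offfun δ n + mt)]
        have h0 : c mt = -(a n * (1 - β)) := by
          rw [hcm, hts0 mt le_rfl, htent0, hβ]
          ring
        have h1 : c (mt + 1) = -(a n * β) := by
          rw [hcm, hts0 (mt + 1) (by omega), htent1, hβ]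
          ring
        rw [h0, h1]
        simp only [smul_eq_mul]
        ring
      · intro m hm hmn
        simp only [Finset.mem_insert, Finset.mem_singleton] at hmn
        push_neg at hmn
        rw [_root_.map_smul]
        rcases Nat.lt_or_ge m mt with h | h
        · rw [hφ0 (offfun δ n + m) (offfun δ n + mt) (by omega)]
          simp
        · have h0 : c m = 0 := by
            rw [hcm, hts0 m h, htt0 m (by omega)]
            ring
          rw [h0]
          simp
  have hnormle : ∀ k, |φ k (curve x A δ s - curve x A δ t)| ≤
      2 * ‖curve x A δ s - curve x A δ t‖ := by
    intro k
    calc |φ k _| ≤ ‖φ k‖ * ‖curve x A δ s - curve x A δ t‖ := (φ k).le_opNorm _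
    _ ≤ 2 * ‖curve x A δ s - curve x A δ t‖ :=
        mul_le_mul_of_nonneg_right (hφ2 k) (norm_nonneg _)
  rw [show A * (8192:ℝ)⁻¹ ^ n / 1024 = a n / 1024 by rw [haj]]
  clear_value a β mt g R c
  rcases le_or_gt (1/16 : ℝ) β with hcase | hcase
  · have h1 := hφsum (offfun δ n + (mt + 1)) (by omega)
    have h2 := hφR (offfun δ n + (mt + 1))
    have h3 := hnormle (offfun δ n + (mt + 1))
    rw [h1, hφk1gn] at h3
    have key : |(-(a n * β))| - |φ (offfun δ n + (mt + 1)) R| ≤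
        |(-(a n * β)) + φ (offfun δ n + (mt + 1)) R| := habs_lower _ _
    have habs : |(-(a n * β))| = a n * β := by
      rw [abs_neg, abs_of_nonneg (mul_nonneg (hapos n).le hβ0)]
    rw [habs] at key
    have hprod : a n * (1/16) ≤ a n * β := mul_le_mul_of_nonneg_left hcase (hapos n).le
    have hap := hapos n
    have hv : a n * β - a n / 1024 ≤ 2 * ‖curve x A δ s - curve x A δ t‖ := by
      calc a n * β - a n / 1024 ≤ a n * β - |φ (offfun δ n + (mt + 1)) R| := by linarith
      _ ≤ |(-(a n * β)) + φ (offfun δ n + (mt + 1)) R| := key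
      _ ≤ 2 * ‖curve x A δ s - curve x A δ t‖ := h3
    linarith
  · obtain ⟨q, hq, hφk0⟩ := hφk0gn
    have h1 := hφsum (offfun δ n + mt) (by omega)
    have h2 := hφR (offfun δ n + mt)
    have h3 := hnormle (offfun δ n + mt)
    rw [h1, hφk0] at h3
    have key1 : |(-(a n * (1 - β))) + (-(a n * β)) * q| -
        |φ (offfun δ n + mt) R| ≤
        |(-(a n * (1 - β))) + (-(a n * β)) * q + φ (offfun δ n + mt) R| := by
      have := habs_lower ((-(a n * (1 - β))) + (-(a n * β)) * q) (φ (offfun δ n + mt) R)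
      linarith
    have key2 : |(-(a n * (1 - β)))| - |(-(a n * β)) * q| ≤
        |(-(a n * (1 - β))) + (-(a n * β)) * q| := habs_lower _ _
    have e1 : |(-(a n * (1 - β)))| = a n * (1 - β) := by
      rw [abs_neg, abs_of_nonneg (mul_nonneg (hapos n).le (by linarith))]
    have e2 : |(-(a n * β)) * q| ≤ 2 * (a n * β) := by
      rw [abs_mul, abs_neg, abs_of_nonneg (mul_nonneg (hapos n).le hβ0)]
      calc a n * β * |q| ≤ a n * β * 2 :=
        mul_le_mul_of_nonneg_left hq (mul_nonneg (hapos n).le hβ0)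
      _ = 2 * (a n * β) := by ring
    rw [e1] at key2
    have hprod : a n * β ≤ a n * (1/16) := mul_le_mul_of_nonneg_left hcase.le (hapos n).le
    have hap := hapos n
    have hv : a n * (1 - β) - 2 * (a n * β) - a n / 1024 ≤
        2 * ‖curve x A δ s - curve x A δ t‖ := by
      calc a n * (1 - β) - 2 * (a n * β) - a n / 1024
          ≤ (a n * (1 - β) - |(-(a n * β)) * q|) - |φ (offfun δ n + mt) R| := by linarith
      _ ≤ |(-(a n * (1 - β))) + (-(a n * β)) * q| - |φ (offfun δ n + mt) R| := by linarith
      _ ≤ |(-(a n * (1 - β))) + (-(a n * β)) * q + φ (offfun δ n + mt) R| := key1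
      _ ≤ 2 * ‖curve x A δ s - curve x A δ t‖ := h3
    nlinarith

end curve

set_option maxHeartbeats 1600000 in
theorem statement8 {X : Type*} [NormedAddCommGroup X] [NormedSpace ℝ X] [CompleteSpace X]
    (hX : ¬ FiniteDimensional ℝ X)
    (ψ : ℝ → ℝ) (hmono : ∀ s t : ℝ, 0 ≤ s → s ≤ t → ψ s ≤ ψ t)
    (hnonneg : ∀ s : ℝ, 0 ≤ s → 0 ≤ ψ s)
    (hlim : Tendsto ψ (𝓝[>] (0 : ℝ)) (𝓝 0)) :
    ∃ f : ℝ → X, ContinuousOn f (Set.Icc 0 1) ∧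
      ∀ s ∈ Set.Icc (0 : ℝ) 1, ∀ t ∈ Set.Icc (0 : ℝ) 1, ψ |s - t| ≤ ‖f s - f t‖ := by
  classical
  obtain ⟨x, φ, hx, hφ2, hφ1, hφ0⟩ := exists_triangular hX
  have key0 : ∀ ε : ℝ, 0 < ε → ∃ r, 0 < r ∧ ∀ u : ℝ, 0 < u → u < r → ψ u < ε := by
    intro ε hε
    obtain ⟨r, hr, h⟩ := Metric.tendsto_nhdsWithin_nhds.mp hlim ε hε
    refine ⟨r, hr, fun u hu hur => ?_⟩
    have h2 := h (show u ∈ Ioi (0:ℝ) from hu)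
      (by rw [Real.dist_eq, sub_zero, abs_of_pos hu]; exact hur)
    rw [Real.dist_eq, sub_zero] at h2
    exact lt_of_le_of_lt (le_abs_self _) h2
  have hψ0 : ψ 0 ≤ 0 := by
    by_contra h
    push_neg at h
    obtain ⟨r, hr, hsmall⟩ := key0 (ψ 0) h
    have h1 := hsmall (r/2) (by linarith) (by linarith)
    have h2 := hmono 0 (r/2) le_rfl (by linarith)
    linarith
  set A : ℝ := 1024 * (ψ 1 + 1) with hA
  have hψ1 : 0 ≤ ψ 1 := hnonneg 1 (by norm_num)
  have hApos : 0 < A := by rw [hA]; linarith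
  choose r hrpos hψr using fun n : ℕ =>
    key0 (A * (8192:ℝ)⁻¹ ^ (n+1) / 1024) (by positivity)
  let δ : ℕ → ℝ := fun n => Nat.rec (motive := fun _ => ℝ)
    (min (1/4) (r 0 / 4)) (fun n d => min (d / 2) (r (n+1) / 4)) n
  have hδ0 : δ 0 = min (1/4) (r 0 / 4) := rfl
  have hδs : ∀ n, δ (n+1) = min (δ n / 2) (r (n+1) / 4) := fun _ => rfl
  have hδpos : ∀ n, 0 < δ n := by
    intro n
    induction n with
    | zero => rw [hδ0]; exact lt_min (by norm_num) (by linarith [hrpos 0])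
    | succ n ih => rw [hδs]; exact lt_min (by linarith) (by linarith [hrpos (n+1)])
  have hδhalf : ∀ n, δ (n+1) ≤ δ n / 2 := fun n => by rw [hδs]; exact min_le_left _ _
  have hδ14 : δ 0 ≤ 1/4 := by rw [hδ0]; exact min_le_left _ _
  have hδr : ∀ n, δ n ≤ r n / 4 := by
    intro n
    cases n with
    | zero => rw [hδ0]; exact min_le_right _ _
    | succ n => rw [hδs]; exact min_le_right _ _
  have hψδ : ∀ n, ψ (2 * δ n) < A * (8192:ℝ)⁻¹ ^ (n+1) / 1024 := by
    intro n
    apply hψr n _ (by linarith [hδpos n])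
    linarith [hδr n, hrpos n]
  have hδsmall : ∀ n, δ n ≤ (1/2 : ℝ)^n * (1/4) := by
    intro n
    induction n with
    | zero => simpa using hδ14
    | succ n ih =>
      have h1 := hδhalf n
      have h2 : ((1:ℝ)/2)^(n+1) * (1/4) = ((1/2)^n * (1/4))/2 := by rw [pow_succ]; ring
      rw [h2]
      linarith
  have main : ∀ u v : ℝ, 0 ≤ u → v ≤ 1 → u < v →
      ψ (v - u) ≤ ‖curve x A δ u - curve x A δ v‖ := by
    intro u v hu hv huv
    have hd0 : 0 < v - u := by linarith
    have hd1 : v - u ≤ 1 := by linarith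
    have hex : ∃ n, 2 * δ n ≤ v - u := by
      obtain ⟨n, hn⟩ := exists_pow_lt_of_lt_one hd0 (by norm_num : (1:ℝ)/2 < 1)
      refine ⟨n, ?_⟩
      have := hδsmall n
      linarith
    set n := Nat.find hex with hn
    have hnle : 2 * δ n ≤ v - u := Nat.find_spec hex
    have hψd : ψ (v - u) ≤ A * (8192:ℝ)⁻¹ ^ n / 1024 := by
      rcases Nat.eq_zero_or_pos n with h0 | hpos
      · have hψle : ψ (v - u) ≤ ψ 1 := hmono _ 1 hd0.le hd1
        have : A * (8192:ℝ)⁻¹ ^ n / 1024 = ψ 1 + 1 := by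
          rw [h0, hA]; norm_num
        linarith
      · have hmin : ¬ (2 * δ (n - 1) ≤ v - u) := Nat.find_min hex (by omega)
        push_neg at hmin
        have hψle : ψ (v - u) ≤ ψ (2 * δ (n - 1)) := hmono _ _ hd0.le hmin.le
        have h2 := hψδ (n - 1)
        rw [show n - 1 + 1 = n by omega] at h2
        linarith
    have hlow := curve_lower x φ hx hφ2 hφ1 hφ0 hApos hδpos n hu hv
      (by linarith : u + 2 * δ n ≤ v)
    linarith
  refine ⟨curve x A δ, (curve_continuous x δ hx hApos.le hδpos).continuousOn, ?_⟩
  intro s hs t ht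
  simp only [Set.mem_Icc] at hs ht
  rcases lt_trichotomy s t with hlt | heq | hgt
  · rw [abs_of_nonpos (by linarith)]
    have := main s t hs.1 ht.2 hlt
    rw [show -(s - t) = t - s by ring]
    exact this
  · rw [heq]
    simp only [sub_self, abs_zero, norm_zero]
    exact hψ0
  · rw [abs_of_nonneg (by linarith)]
    have := main t s ht.1 hs.2 hgt
    rw [norm_sub_rev]
    exact this
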